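/- Let G be the cartesian product of a finite vertex-transitive graph H with the cycle ℤ/nℤ, and let ω: E(G) → {a,b} be uniform i.i.d. (0<a<b). Let c_G(ω) be the minimum ω-length of a circumference path (a closed path whose projection to ℤ/nℤ has winding degree 1). Then for every edge e of G, P[ρ_e c_G < 0] ≤ (b/a)·|V(H)|^{-1}, where ρ_e c_G := (c_G - c_G∘σ_e)/2 and σ_e flips the value of ω at e. -/

import Mathlib

open Finset

/-- The edge set of the cartesian product of a graph on `α` with the cycle `ℤ/nℤ`:
horizontal edges (an edge of `H` in a fixed layer) and vertical edges (from `(v,t)`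
to `(v,t+1)`). -/
abbrev TorusEdge (α : Type*) (n : ℕ) : Type _ := (Sym2 α × ZMod n) ⊕ (α × ZMod n)

/-- One step of a walk in `H □ (ℤ/nℤ)`: `Sum.inl u` moves to `(u, t)` (along an
`H`-edge), `Sum.inr true` moves to `(v, t+1)`, `Sum.inr false` to `(v, t-1)`. -/
def cStep {α : Type*} {n : ℕ} : α × ZMod n → α ⊕ Bool → α × ZMod n
  | (_, t), Sum.inl u => (u, t)
  | (v, t), Sum.inr true => (v, t + 1)
  | (v, t), Sum.inr false => (v, t - 1)

/-- The endpoint of a walk in `H □ (ℤ/nℤ)`. -/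
def cWalkEnd {α : Type*} {n : ℕ} : α × ZMod n → List (α ⊕ Bool) → α × ZMod n
  | p, [] => p
  | p, st :: rest => cWalkEnd (cStep p st) rest

/-- Validity of a walk: every horizontal step must follow an edge of `H`. -/
def cWalkValid {α : Type*} {n : ℕ} (H : SimpleGraph α) :
    α × ZMod n → List (α ⊕ Bool) → Prop
  | _, [] => True
  | p, Sum.inl u :: rest => H.Adj p.1 u ∧ cWalkValid H (cStep p (Sum.inl u)) rest
  | p, Sum.inr s :: rest => cWalkValid H (cStep p (Sum.inr s)) rest

/-- The list of edges traversed by a walk in `H □ (ℤ/nℤ)`. -/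
def cWalkEdges {α : Type*} {n : ℕ} : α × ZMod n → List (α ⊕ Bool) → List (TorusEdge α n)
  | _, [] => []
  | p, Sum.inl u :: rest => Sum.inl (s(p.1, u), p.2) :: cWalkEdges (cStep p (Sum.inl u)) rest
  | p, Sum.inr true :: rest => Sum.inr (p.1, p.2) :: cWalkEdges (cStep p (Sum.inr true)) rest
  | p, Sum.inr false :: rest =>
      Sum.inr (p.1, p.2 - 1) :: cWalkEdges (cStep p (Sum.inr false)) rest

/-- The winding number of the projection of a walk to the cycle: the number of
`+1` vertical steps minus the number of `-1` vertical steps. -/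
def cWinding {α : Type*} [DecidableEq α] (steps : List (α ⊕ Bool)) : ℤ :=
  (steps.count (Sum.inr true) : ℤ) - (steps.count (Sum.inr false) : ℤ)

/-- Edge weight of a configuration `ω : E → Bool` (`false ↦ a`, `true ↦ b`). -/
noncomputable def cWt (a b : ℝ) {α : Type*} {n : ℕ} (ω : TorusEdge α n → Bool)
    (e : TorusEdge α n) : ℝ :=
  if ω e then b else a

/-- The first passage percolation circumference `c_G(ω)`: the minimal `ω`-length of a
closed walk in `G = H □ (ℤ/nℤ)` whose projection to the cycle has degree `1`,
i.e. whose winding number is `n`. -/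
noncomputable def circumLen (a b : ℝ) {α : Type*} [DecidableEq α] {n : ℕ}
    (H : SimpleGraph α) (ω : TorusEdge α n → Bool) : ℝ :=
  sInf {L : ℝ | ∃ (start : α × ZMod n) (steps : List (α ⊕ Bool)),
    cWalkValid H start steps ∧ cWalkEnd start steps = start ∧
    cWinding steps = (n : ℤ) ∧ ((cWalkEdges start steps).map (cWt a b ω)).sum = L}

/-- The discrete derivative `ρ_e f = (f - f∘σ_e)/2`. -/
noncomputable def cRho {α : Type*} [DecidableEq α] {n : ℕ} (e : TorusEdge α n)
    (f : (TorusEdge α n → Bool) → ℝ) : (TorusEdge α n → Bool) → ℝ :=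
  fun ω => (f ω - f (Function.update ω e (!ω e))) / 2

section Aux

set_option linter.unusedSectionVars false

variable {α : Type*} [DecidableEq α] {n : ℕ} {H : SimpleGraph α}

/-- The set whose infimum is `circumLen`. -/
def WSet (a b : ℝ) (H : SimpleGraph α) (ω : TorusEdge α n → Bool) : Set ℝ :=
  {L : ℝ | ∃ (start : α × ZMod n) (steps : List (α ⊕ Bool)),
    cWalkValid H start steps ∧ cWalkEnd start steps = start ∧
    cWinding steps = (n : ℤ) ∧ ((cWalkEdges start steps).map (cWt a b ω)).sum = L}

lemma circumLen_eq_sInf (a b : ℝ) (ω : TorusEdge α n → Bool) :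
    circumLen a b H ω = sInf (WSet a b H ω) := rfl

lemma cWalkEdges_length (p : α × ZMod n) (steps : List (α ⊕ Bool)) :
    (cWalkEdges p steps).length = steps.length := by
  induction steps generalizing p with
  | nil => rfl
  | cons st rest ih =>
    rcases st with u | s
    · simp [cWalkEdges, ih]
    · cases s <;> simp [cWalkEdges, ih]

lemma cWalkEdges_countP_left (p : α × ZMod n) (steps : List (α ⊕ Bool)) :
    (cWalkEdges p steps).countP (fun x => x.isLeft)
      = steps.countP (fun x => x.isLeft) := by
  induction steps generalizing p with
  | nil => rfl
  | cons st rest ih =>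
    rcases st with u | s
    · simp [cWalkEdges, List.countP_cons, ih]
    · cases s <;> simp [cWalkEdges, List.countP_cons, ih]

lemma le_sum_map {a b : ℝ} (hab : a ≤ b) (ω : TorusEdge α n → Bool)
    (l : List (TorusEdge α n)) :
    a * l.length ≤ (l.map (cWt a b ω)).sum := by
  induction l with
  | nil => simp
  | cons x l ih =>
    have hx : a ≤ cWt a b ω x := by
      unfold cWt; split <;> simp [hab, le_refl]
    simp only [List.map_cons, List.sum_cons, List.length_cons]
    push_cast
    nlinarith

lemma cWalkEnd_replicate (v : α) (t : ZMod n) (k : ℕ) :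
    cWalkEnd (v, t) (List.replicate k (Sum.inr true)) = (v, t + k) := by
  induction k generalizing t with
  | zero => simp [cWalkEnd]
  | succ k ih =>
    rw [List.replicate_succ]
    show cWalkEnd (cStep (v, t) (Sum.inr true)) _ = _
    rw [show cStep (v, t) (Sum.inr true) = (v, t + 1) from rfl, ih]
    congr 1
    push_cast
    ring

lemma cWalkValid_replicate (H : SimpleGraph α) (v : α) (t : ZMod n) (k : ℕ) :
    cWalkValid H (v, t) (List.replicate k (Sum.inr true)) := by
  induction k generalizing t with
  | zero => trivial
  | succ k ih =>
    rw [List.replicate_succ]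
    exact ih (t + 1)

lemma count_true_replicate (k : ℕ) :
    List.count (Sum.inr true) (List.replicate k (Sum.inr true : α ⊕ Bool)) = k := by
  induction k with
  | zero => rfl
  | succ k ih => rw [List.replicate_succ, List.count_cons, ih, if_pos (by rfl)]

lemma count_false_replicate (k : ℕ) :
    List.count (Sum.inr false) (List.replicate k (Sum.inr true : α ⊕ Bool)) = 0 := by
  induction k with
  | zero => rfl
  | succ k ih => rw [List.replicate_succ, List.count_cons, ih, if_neg (by exact Bool.false_ne_true)]

lemma cWinding_replicate (k : ℕ) :
    cWinding (α := α) (List.replicate k (Sum.inr true)) = (k : ℤ) := by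
  rw [cWinding, count_true_replicate (α := α) k, count_false_replicate (α := α) k]
  simp

lemma loop_mem_WSet (a b : ℝ) (H : SimpleGraph α) [NeZero n] (v : α)
    (ω : TorusEdge α n → Bool) :
    ((cWalkEdges ((v, 0) : α × ZMod n) (List.replicate n (Sum.inr true))).map
      (cWt a b ω)).sum ∈ WSet a b H ω := by
  refine ⟨(v, 0), List.replicate n (Sum.inr true), cWalkValid_replicate H v 0 n, ?_, ?_, rfl⟩
  · rw [cWalkEnd_replicate]
    simp [ZMod.natCast_self]
  · exact cWinding_replicate n

lemma WSet_nonempty (a b : ℝ) (H : SimpleGraph α) [NeZero n] (v : α)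
    (ω : TorusEdge α n → Bool) : (WSet a b H ω).Nonempty :=
  ⟨_, loop_mem_WSet a b H v ω⟩

lemma WSet_bddBelow {a b : ℝ} (ha : 0 ≤ a) (hb : 0 ≤ b) (H : SimpleGraph α)
    (ω : TorusEdge α n → Bool) : BddBelow (WSet a b H ω) := by
  refine ⟨0, fun L hL => ?_⟩
  obtain ⟨start, steps, -, -, -, rfl⟩ := hL
  apply List.sum_nonneg
  intro x hx
  obtain ⟨f, -, rfl⟩ := List.mem_map.1 hx
  unfold cWt; split <;> assumption

lemma sum_map_update_of_not_mem {a b : ℝ} (ω : TorusEdge α n → Bool)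
    {f : TorusEdge α n} (x : Bool) {l : List (TorusEdge α n)} (hf : f ∉ l) :
    (l.map (cWt a b (Function.update ω f x))).sum = (l.map (cWt a b ω)).sum := by
  congr 1
  apply List.map_congr_left
  intro g hg
  unfold cWt
  rw [Function.update_of_ne (by rintro rfl; exact hf hg)]

/-! ### Symmetries -/

def eMap (φ : α ≃ α) (r : ZMod n) : TorusEdge α n → TorusEdge α n
  | Sum.inl (q, t) => Sum.inl (q.map φ, t + r)
  | Sum.inr (v, t) => Sum.inr (φ v, t + r)

lemma eMap_eMap (φ : α ≃ α) (r : ZMod n) (f : TorusEdge α n) :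
    eMap φ r (eMap φ.symm (-r) f) = f := by
  rcases f with ⟨q, t⟩ | ⟨v, t⟩
  · simp only [eMap, Sym2.map_map]
    have h1 : (⇑φ ∘ ⇑φ.symm) = id := φ.self_comp_symm
    rw [h1, Sym2.map_id]
    simp
  · simp [eMap]

lemma eMap_leftInv (φ : α ≃ α) (r : ZMod n) (f : TorusEdge α n) :
    eMap φ.symm (-r) (eMap φ r f) = f := by
  have h := eMap_eMap (φ := φ.symm) (r := -r) f
  simpa using h

lemma eMap_injective (φ : α ≃ α) (r : ZMod n) : Function.Injective (eMap φ r) := by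
  intro x y h
  have h2 := congrArg (eMap φ.symm (-r)) h
  rwa [eMap_leftInv, eMap_leftInv] at h2

lemma cWalkEnd_map (φ : α ≃ α) (r : ZMod n) (v : α) (t : ZMod n)
    (steps : List (α ⊕ Bool)) :
    cWalkEnd (φ v, t + r) (steps.map (Sum.map ⇑φ id))
      = (φ (cWalkEnd (v, t) steps).1, (cWalkEnd (v, t) steps).2 + r) := by
  induction steps generalizing v t with
  | nil => rfl
  | cons st rest ih =>
    rcases st with u | s
    · exact ih u t
    · cases s
      · show cWalkEnd (φ v, t + r - 1) _ = _
        rw [show t + r - 1 = (t - 1) + r by ring]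
        exact ih v (t - 1)
      · show cWalkEnd (φ v, t + r + 1) _ = _
        rw [show t + r + 1 = (t + 1) + r by ring]
        exact ih v (t + 1)

lemma cWalkValid_map (φ : α ≃ α) (hφ : ∀ x y, H.Adj x y → H.Adj (φ x) (φ y))
    (v : α) (t t' : ZMod n) (steps : List (α ⊕ Bool))
    (h : cWalkValid H (v, t) steps) :
    cWalkValid H (φ v, t') (steps.map (Sum.map ⇑φ id)) := by
  induction steps generalizing v t t' with
  | nil => trivial
  | cons st rest ih =>
    rcases st with u | s
    · exact ⟨hφ _ _ h.1, ih u t t' h.2⟩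
    · cases s
      · exact ih v (t - 1) (t' - 1) h
      · exact ih v (t + 1) (t' + 1) h

lemma cWalkEdges_map (φ : α ≃ α) (r : ZMod n) (v : α) (t : ZMod n)
    (steps : List (α ⊕ Bool)) :
    cWalkEdges (φ v, t + r) (steps.map (Sum.map ⇑φ id))
      = (cWalkEdges (v, t) steps).map (eMap φ r) := by
  induction steps generalizing v t with
  | nil => rfl
  | cons st rest ih =>
    rcases st with u | s
    · show Sum.inl (s(φ v, φ u), t + r) :: cWalkEdges (φ u, t + r) (rest.map (Sum.map ⇑φ id))
          = List.map (eMap φ r) (Sum.inl (s(v, u), t) :: cWalkEdges (u, t) rest)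
      rw [List.map_cons, ← ih u t]
      rfl
    · cases s
      · show Sum.inr (φ v, t + r - 1) :: cWalkEdges (φ v, t + r - 1) (rest.map (Sum.map ⇑φ id))
            = List.map (eMap φ r) (Sum.inr (v, t - 1) :: cWalkEdges (v, t - 1) rest)
        rw [List.map_cons, show t + r - 1 = (t - 1) + r by ring, ← ih v (t - 1)]
        rfl
      · show Sum.inr (φ v, t + r) :: cWalkEdges (φ v, t + r + 1) (rest.map (Sum.map ⇑φ id))
            = List.map (eMap φ r) (Sum.inr (v, t) :: cWalkEdges (v, t + 1) rest)
        rw [List.map_cons, show t + r + 1 = (t + 1) + r by ring, ← ih v (t + 1)]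
        rfl

lemma count_map_sum (φ : α ≃ α) (s : Bool) (l : List (α ⊕ Bool)) :
    (l.map (Sum.map ⇑φ id)).count (Sum.inr s) = l.count (Sum.inr s) := by
  induction l with
  | nil => rfl
  | cons x rest ih =>
    rw [List.map_cons, List.count_cons, List.count_cons, ih]
    rcases x with u | s'
    · simp only [Sum.map_inl,
        show ((Sum.inl (φ u) : α ⊕ Bool) == Sum.inr s) = false from rfl,
        show ((Sum.inl u : α ⊕ Bool) == Sum.inr s) = false from rfl,
        Bool.false_eq_true, if_false]
    · simp only [Sum.map_inr, id]; rfl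

lemma cWinding_map (φ : α ≃ α) (steps : List (α ⊕ Bool)) :
    cWinding (steps.map (Sum.map ⇑φ id)) = cWinding steps := by
  unfold cWinding
  rw [count_map_sum, count_map_sum]

lemma WSet_comp_subset (a b : ℝ) (φ : α ≃ α)
    (hφ : ∀ x y, H.Adj x y → H.Adj (φ x) (φ y)) (r : ZMod n)
    (ω : TorusEdge α n → Bool) :
    WSet a b H (fun f => ω (eMap φ r f)) ⊆ WSet a b H ω := by
  rintro L ⟨⟨v, t⟩, steps, hval, hend, hwind, rfl⟩
  refine ⟨(φ v, t + r), steps.map (Sum.map ⇑φ id),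
    cWalkValid_map φ hφ v t (t + r) steps hval, ?_, ?_, ?_⟩
  · rw [cWalkEnd_map, hend]
  · rw [cWinding_map]; exact hwind
  · rw [cWalkEdges_map, List.map_map]
    rfl

lemma circumLen_comp {a b : ℝ} [NeZero n] (ha : 0 ≤ a) (hb : 0 ≤ b) (v0 : α)
    (φ : H ≃g H) (r : ZMod n) (ω : TorusEdge α n → Bool) :
    circumLen a b H (fun f => ω (eMap φ.toEquiv r f)) = circumLen a b H ω := by
  have hφ : ∀ x y, H.Adj x y → H.Adj (φ x) (φ y) := fun x y h => φ.map_rel_iff.mpr h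
  have hφ' : ∀ x y, H.Adj x y → H.Adj (φ.toEquiv.symm x) (φ.toEquiv.symm y) :=
    fun x y h => φ.symm.map_rel_iff.mpr h
  have h1 : WSet a b H (fun f => ω (eMap φ.toEquiv r f)) ⊆ WSet a b H ω :=
    WSet_comp_subset a b φ.toEquiv hφ r ω
  have h2 : WSet a b H ω ⊆ WSet a b H (fun f => ω (eMap φ.toEquiv r f)) := by
    have h3 := WSet_comp_subset a b φ.toEquiv.symm hφ' (-r)
      (fun f => ω (eMap φ.toEquiv r f))
    have h4 : (fun f => (fun g => ω (eMap φ.toEquiv r g)) (eMap φ.toEquiv.symm (-r) f)) = ω :=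
      funext fun f => congrArg ω (eMap_eMap φ.toEquiv r f)
    rwa [h4] at h3
  rw [circumLen_eq_sInf, circumLen_eq_sInf]
  apply le_antisymm
  · exact csInf_le_csInf (WSet_bddBelow ha hb H _) (WSet_nonempty a b H v0 ω) h2
  · exact csInf_le_csInf (WSet_bddBelow ha hb H _) (WSet_nonempty a b H v0 _) h1

lemma update_comp (φ : α ≃ α) (r : ZMod n) (ω : TorusEdge α n → Bool)
    (e : TorusEdge α n) (x : Bool) :
    (fun g => Function.update ω (eMap φ r e) x (eMap φ r g))
      = Function.update (fun g => ω (eMap φ r g)) e x := by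
  funext g
  by_cases hg : g = e
  · subst hg
    rw [Function.update_self, Function.update_self]
  · rw [Function.update_of_ne (fun hc => hg (eMap_injective φ r hc)),
      Function.update_of_ne hg]

lemma cRho_comp {a b : ℝ} [NeZero n] (ha : 0 ≤ a) (hb : 0 ≤ b) (v0 : α)
    (φ : H ≃g H) (r : ZMod n) (e : TorusEdge α n) (ω : TorusEdge α n → Bool) :
    cRho e (circumLen a b H) (fun g => ω (eMap φ.toEquiv r g))
      = cRho (eMap φ.toEquiv r e) (circumLen a b H) ω := by
  unfold cRho
  have h1 : Function.update (fun g => ω (eMap φ.toEquiv r g)) e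
        (!(fun g => ω (eMap φ.toEquiv r g)) e)
      = fun g => (Function.update ω (eMap φ.toEquiv r e)
          (!ω (eMap φ.toEquiv r e))) (eMap φ.toEquiv r g) :=
    (update_comp φ.toEquiv r ω e _).symm
  rw [h1, circumLen_comp ha hb v0 φ r ω, circumLen_comp ha hb v0 φ r _]

lemma card_rho_comp {a b : ℝ} [NeZero n] [Fintype α] (ha : 0 ≤ a) (hb : 0 ≤ b)
    (v0 : α) (φ : H ≃g H) (r : ZMod n) (e : TorusEdge α n) :
    (Finset.univ.filter fun ω : TorusEdge α n → Bool =>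
        cRho (eMap φ.toEquiv r e) (circumLen a b H) ω < 0).card
      = (Finset.univ.filter fun ω : TorusEdge α n → Bool =>
        cRho e (circumLen a b H) ω < 0).card := by
  apply Finset.card_bij' (i := fun ω _ => fun g => ω (eMap φ.toEquiv r g))
    (j := fun ω _ => fun g => ω (eMap φ.symm.toEquiv (-r) g))
  · intro ω hω
    rw [Finset.mem_filter] at *
    refine ⟨Finset.mem_univ _, ?_⟩
    rw [cRho_comp ha hb v0 φ r e ω]
    exact hω.2
  · intro ω hω
    rw [Finset.mem_filter] at *
    refine ⟨Finset.mem_univ _, ?_⟩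
    have h := cRho_comp (H := H) ha hb v0 φ.symm (-r) (eMap φ.toEquiv r e) ω
    have h2 : eMap φ.symm.toEquiv (-r) (eMap φ.toEquiv r e) = e := eMap_leftInv _ _ _
    rw [h2] at h
    rw [h]
    exact hω.2
  · intro ω hω
    funext g
    exact congrArg ω (eMap_eMap φ.toEquiv r g)
  · intro ω hω
    funext g
    exact congrArg ω (eMap_leftInv φ.toEquiv r g)

lemma pivotal_bound {a b : ℝ} [NeZero n] (ha : 0 < a) (hab : a ≤ b) (v0 : α)
    (ω : TorusEdge α n → Bool) (O : Finset (TorusEdge α n)) (k : ℕ)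
    (hk : ∀ (start : α × ZMod n) (steps : List (α ⊕ Bool)),
      cWalkValid H start steps → cWalkEnd start steps = start →
      cWinding steps = (n : ℤ) →
      ∀ P : Finset (TorusEdge α n), P ⊆ O →
        (∀ f ∈ P, f ∈ cWalkEdges start steps) →
        a * ((P.card : ℝ) + k) ≤ ((cWalkEdges start steps).map (cWt a b ω)).sum) :
    a * (((O.filter fun f => cRho f (circumLen a b H) ω < 0).card : ℝ) + k)
      ≤ circumLen a b H ω := by
  have hb : (0:ℝ) ≤ b := ha.le.trans hab
  set c := circumLen a b H with hc
  set P := O.filter fun f => cRho f c ω < 0 with hP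
  apply le_of_forall_pos_lt_add
  intro ε hε
  set F : Finset ℝ :=
    insert ε (P.image fun f => c (Function.update ω f (!ω f)) - c ω) with hF
  have hFne : F.Nonempty := ⟨ε, Finset.mem_insert_self _ _⟩
  set ε' := F.min' hFne with hε'
  have hε'pos : 0 < ε' := by
    rw [hε']
    apply (Finset.lt_min'_iff F hFne).mpr
    intro y hy
    rw [hF, Finset.mem_insert] at hy
    rcases hy with rfl | hy
    · exact hε
    · obtain ⟨f, hf, rfl⟩ := Finset.mem_image.1 hy
      have hf2 : cRho f c ω < 0 := (Finset.mem_filter.1 hf).2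
      have : (c ω - c (Function.update ω f (!ω f))) / 2 < 0 := hf2
      linarith
  have hε'le : ε' ≤ ε := Finset.min'_le F ε (Finset.mem_insert_self _ _)
  have hgap : ∀ f ∈ P, ε' ≤ c (Function.update ω f (!ω f)) - c ω := by
    intro f hf
    exact Finset.min'_le F _ (Finset.mem_insert_of_mem (Finset.mem_image_of_mem _ hf))
  have hlt : sInf (WSet a b H ω) < c ω + ε' := by
    rw [hc, circumLen_eq_sInf]
    linarith
  obtain ⟨L, hLmem, hLlt⟩ := (csInf_lt_iff (WSet_bddBelow ha.le hb H ω)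
    (WSet_nonempty a b H v0 ω)).1 hlt
  obtain ⟨start, steps, hval, hend, hwind, hsum⟩ := hLmem
  have hmem : ∀ f ∈ P, f ∈ cWalkEdges start steps := by
    intro f hf
    by_contra hnot
    have h1 : ((cWalkEdges start steps).map (cWt a b (Function.update ω f (!ω f)))).sum
        = L := by rw [sum_map_update_of_not_mem ω _ hnot, hsum]
    have h2 : c (Function.update ω f (!ω f)) ≤ L := by
      rw [hc, circumLen_eq_sInf]
      exact csInf_le (WSet_bddBelow ha.le hb H _)
        ⟨start, steps, hval, hend, hwind, h1⟩
    have h3 := hgap f hf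
    have h4 : c ω + ε' ≤ c (Function.update ω f (!ω f)) := by linarith
    linarith
  have hPk := hk start steps hval hend hwind P (Finset.filter_subset _ _) hmem
  calc a * ((P.card : ℝ) + k) ≤ ((cWalkEdges start steps).map (cWt a b ω)).sum := hPk
  _ = L := hsum
  _ < c ω + ε' := hLlt
  _ ≤ c ω + ε := by linarith

lemma sum_card_pivotal {a b : ℝ} [Fintype α] [NeZero n] (O : Finset (TorusEdge α n)) :
    ∑ f ∈ O, (Finset.univ.filter fun ω : TorusEdge α n → Bool =>
        cRho f (circumLen a b H) ω < 0).card
      = ∑ ω : TorusEdge α n → Bool,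
        (O.filter fun f => cRho f (circumLen a b H) ω < 0).card := by
  simp only [Finset.card_filter]
  exact Finset.sum_comm

lemma two_sum_cWt {a b : ℝ} [Fintype α] [NeZero n] (f : TorusEdge α n) :
    2 * ∑ ω : TorusEdge α n → Bool, cWt a b ω f
      = (2 ^ Fintype.card (TorusEdge α n) : ℝ) * (a + b) := by
  have hinv : Function.Involutive
      (fun ω : TorusEdge α n → Bool => Function.update ω f (!ω f)) := by
    intro ω
    funext g
    by_cases hg : g = f
    · subst hg; simp
    · simp [Function.update_of_ne hg]
  have h1 : ∑ ω : TorusEdge α n → Bool, cWt a b (Function.update ω f (!ω f)) f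
      = ∑ ω : TorusEdge α n → Bool, cWt a b ω f :=
    Fintype.sum_bijective _ hinv.bijective _ _ (fun ω => rfl)
  have h2 : ∀ ω : TorusEdge α n → Bool,
      cWt a b ω f + cWt a b (Function.update ω f (!ω f)) f = a + b := by
    intro ω
    unfold cWt
    rw [Function.update_self]
    cases h : ω f <;> simp [h] <;> ring
  have h3 : ∑ ω : TorusEdge α n → Bool,
      (cWt a b ω f + cWt a b (Function.update ω f (!ω f)) f)
      = (Fintype.card (TorusEdge α n → Bool) : ℝ) * (a + b) := by
    rw [Finset.sum_congr rfl (fun ω _ => h2 ω), Finset.sum_const, Finset.card_univ,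
      nsmul_eq_mul]
  rw [Finset.sum_add_distrib, h1] at h3
  have h4 : (Fintype.card (TorusEdge α n → Bool) : ℝ)
      = (2 : ℝ) ^ Fintype.card (TorusEdge α n) := by
    rw [Fintype.card_fun]
    push_cast
    norm_num
  rw [h4] at h3
  linarith

lemma sum_config_list {a b : ℝ} [Fintype α] [NeZero n] (l : List (TorusEdge α n)) :
    2 * ∑ ω : TorusEdge α n → Bool, (l.map (cWt a b ω)).sum
      = (2 ^ Fintype.card (TorusEdge α n) : ℝ) * (l.length * (a + b)) := by
  induction l with
  | nil => simp
  | cons f l ih =>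
    simp only [List.map_cons, List.sum_cons, List.length_cons]
    rw [Finset.sum_add_distrib, mul_add, ih, two_sum_cWt f]
    push_cast
    ring

lemma sum_circumLen_le {a b : ℝ} [NeZero n] [Fintype α] (ha : 0 ≤ a) (hb : 0 ≤ b)
    (v0 : α) :
    2 * ∑ ω : TorusEdge α n → Bool, circumLen a b H ω
      ≤ (2 ^ Fintype.card (TorusEdge α n) : ℝ) * (n * (a + b)) := by
  have hle : ∀ ω : TorusEdge α n → Bool, circumLen a b H ω
      ≤ ((cWalkEdges ((v0, 0) : α × ZMod n) (List.replicate n (Sum.inr true))).map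
          (cWt a b ω)).sum := by
    intro ω
    rw [circumLen_eq_sInf]
    exact csInf_le (WSet_bddBelow ha hb H ω) (loop_mem_WSet a b H v0 ω)
  have h1 : 2 * ∑ ω : TorusEdge α n → Bool, circumLen a b H ω
      ≤ 2 * ∑ ω : TorusEdge α n → Bool,
        ((cWalkEdges ((v0, 0) : α × ZMod n) (List.replicate n (Sum.inr true))).map
          (cWt a b ω)).sum := by
    have := Finset.sum_le_sum (fun ω (_ : ω ∈ Finset.univ) => hle ω)
    linarith
  have h2 := sum_config_list (a := a) (b := b)
    (cWalkEdges ((v0, 0) : α × ZMod n) (List.replicate n (Sum.inr true)))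
  rw [cWalkEdges_length, List.length_replicate] at h2
  linarith [h1, h2.le]

lemma my_countP_split {β γ : Type*} (l : List (β ⊕ γ)) :
    l.countP (fun x => x.isLeft) + l.countP (fun x => !x.isLeft) = l.length := by
  induction l with
  | nil => rfl
  | cons x rest ih =>
    rw [List.countP_cons, List.countP_cons, List.length_cons]
    rcases x with q | p <;> simp at ih ⊢ <;> omega

lemma count_inrtrue_le (l : List (α ⊕ Bool)) :
    l.count (Sum.inr true) ≤ l.countP (fun x => !x.isLeft) := by
  rw [List.count_eq_countP]
  apply List.countP_mono_left
  intro x hx h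
  rcases x with u | s
  · rw [show ((Sum.inl u : α ⊕ Bool) == Sum.inr true) = false from rfl] at h
    exact absurd h Bool.false_ne_true
  · rfl

lemma card_le_sum_general {a b : ℝ} (ha : 0 < a) (hab : a ≤ b)
    (ω : TorusEdge α n → Bool) (start : α × ZMod n) (steps : List (α ⊕ Bool))
    (P : Finset (TorusEdge α n)) (hmem : ∀ f ∈ P, f ∈ cWalkEdges start steps) :
    a * (P.card : ℝ) ≤ ((cWalkEdges start steps).map (cWt a b ω)).sum := by
  have h1 : P ⊆ (cWalkEdges start steps).toFinset :=
    fun f hf => List.mem_toFinset.2 (hmem f hf)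
  have h2 : P.card ≤ (cWalkEdges start steps).length :=
    (Finset.card_le_card h1).trans (cWalkEdges start steps).toFinset_card_le
  calc a * (P.card : ℝ) ≤ a * (cWalkEdges start steps).length := by
        apply mul_le_mul_of_nonneg_left _ ha.le
        exact_mod_cast h2
  _ ≤ _ := le_sum_map hab ω _

lemma card_le_sum_left {a b : ℝ} (ha : 0 < a) (hab : a ≤ b)
    (ω : TorusEdge α n → Bool) (start : α × ZMod n) (steps : List (α ⊕ Bool))
    (hwind : cWinding steps = (n : ℤ))
    (P : Finset (TorusEdge α n)) (hPleft : ∀ f ∈ P, f.isLeft)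
    (hmem : ∀ f ∈ P, f ∈ cWalkEdges start steps) :
    a * ((P.card : ℝ) + n) ≤ ((cWalkEdges start steps).map (cWt a b ω)).sum := by
  have h1 : P ⊆ ((cWalkEdges start steps).filter (fun x => x.isLeft)).toFinset := by
    intro f hf
    rw [List.mem_toFinset, List.mem_filter]
    exact ⟨hmem f hf, hPleft f hf⟩
  have h2 : P.card ≤ ((cWalkEdges start steps).filter (fun x => x.isLeft)).length :=
    (Finset.card_le_card h1).trans (List.toFinset_card_le _)
  have h3 : ((cWalkEdges start steps).filter (fun x => x.isLeft)).length
      = (cWalkEdges start steps).countP (fun x => x.isLeft) :=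
    List.countP_eq_length_filter.symm
  have h4 : n ≤ steps.countP (fun x => !x.isLeft) := by
    have h5 := count_inrtrue_le steps
    have h6 : (n : ℤ) ≤ steps.count (Sum.inr true) := by
      unfold cWinding at hwind
      omega
    omega
  have h7 : (cWalkEdges start steps).countP (fun x => x.isLeft)
      = steps.countP (fun x => x.isLeft) := cWalkEdges_countP_left start steps
  have h8 : (cWalkEdges start steps).countP (fun x => x.isLeft)
      + (cWalkEdges start steps).countP (fun x => !x.isLeft)
      = (cWalkEdges start steps).length := my_countP_split _
  have h9 : (cWalkEdges start steps).countP (fun x => !x.isLeft)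
      = steps.countP (fun x => !x.isLeft) := by
    have h10 : steps.countP (fun x => x.isLeft) + steps.countP (fun x => !x.isLeft)
        = steps.length := my_countP_split _
    have h11 := cWalkEdges_length start steps
    omega
  have h12 : P.card + n ≤ (cWalkEdges start steps).length := by omega
  calc a * ((P.card : ℝ) + n) ≤ a * (cWalkEdges start steps).length := by
        apply mul_le_mul_of_nonneg_left _ ha.le
        exact_mod_cast h12
  _ ≤ _ := le_sum_map hab ω _

lemma card_config (hα : Nonempty α) [Fintype α] [NeZero n] :
    (Fintype.card (TorusEdge α n → Bool) : ℝ)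
      = (2 : ℝ) ^ Fintype.card (TorusEdge α n) := by
  rw [Fintype.card_fun]
  push_cast
  norm_num

lemma master {a b : ℝ} [Fintype α] [NeZero n] (ha : 0 < a) (hab : a ≤ b) (v0 : α)
    (e : TorusEdge α n) (O : Finset (TorusEdge α n)) (k : ℕ)
    (horb : ∀ f ∈ O,
      (Finset.univ.filter fun ω : TorusEdge α n → Bool =>
        cRho f (circumLen a b H) ω < 0).card
      = (Finset.univ.filter fun ω : TorusEdge α n → Bool =>
        cRho e (circumLen a b H) ω < 0).card)
    (hk : ∀ (ω : TorusEdge α n → Bool) (start : α × ZMod n) (steps : List (α ⊕ Bool)),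
      cWalkValid H start steps → cWalkEnd start steps = start →
      cWinding steps = (n : ℤ) →
      ∀ P : Finset (TorusEdge α n), P ⊆ O →
        (∀ f ∈ P, f ∈ cWalkEdges start steps) →
        a * ((P.card : ℝ) + k) ≤ ((cWalkEdges start steps).map (cWt a b ω)).sum) :
    2 * (a * ((O.card : ℝ)
        * ((Finset.univ.filter fun ω : TorusEdge α n → Bool =>
            cRho e (circumLen a b H) ω < 0).card : ℝ)
        + (k : ℝ) * 2 ^ Fintype.card (TorusEdge α n)))
      ≤ (2 ^ Fintype.card (TorusEdge α n) : ℝ) * (n * (a + b)) := by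
  have hα : Nonempty α := ⟨v0⟩
  have hb0 : (0:ℝ) ≤ b := ha.le.trans hab
  have h1 : ∀ ω : TorusEdge α n → Bool,
      a * (((O.filter fun f => cRho f (circumLen a b H) ω < 0).card : ℝ) + k)
        ≤ circumLen a b H ω :=
    fun ω => pivotal_bound ha hab v0 ω O k (hk ω)
  have h2 := Finset.sum_le_sum
    (fun ω (_ : ω ∈ (Finset.univ : Finset (TorusEdge α n → Bool))) => h1 ω)
  have h5 : ∑ f ∈ O, (Finset.univ.filter fun ω : TorusEdge α n → Bool =>
        cRho f (circumLen a b H) ω < 0).card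
      = O.card * (Finset.univ.filter fun ω : TorusEdge α n → Bool =>
        cRho e (circumLen a b H) ω < 0).card := by
    rw [Finset.sum_congr rfl horb, Finset.sum_const, smul_eq_mul]
  have h4 : ∑ ω : TorusEdge α n → Bool,
      ((O.filter fun f => cRho f (circumLen a b H) ω < 0).card : ℝ)
      = (O.card : ℝ) * ((Finset.univ.filter fun ω : TorusEdge α n → Bool =>
          cRho e (circumLen a b H) ω < 0).card : ℝ) := by
    rw [← Nat.cast_sum, ← sum_card_pivotal (a := a) (b := b) O, h5]
    push_cast
    ring
  have h3 : ∑ ω : TorusEdge α n → Bool,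
      (a * (((O.filter fun f => cRho f (circumLen a b H) ω < 0).card : ℝ) + k))
      = a * ((O.card : ℝ) * ((Finset.univ.filter fun ω : TorusEdge α n → Bool =>
            cRho e (circumLen a b H) ω < 0).card : ℝ)
          + (k : ℝ) * 2 ^ Fintype.card (TorusEdge α n)) := by
    rw [← Finset.mul_sum]
    congr 1
    rw [Finset.sum_add_distrib, h4, Finset.sum_const, Finset.card_univ, nsmul_eq_mul,
      card_config hα]
    ring
  rw [h3] at h2
  have h6 := sum_circumLen_le (a := a) (b := b) (n := n) (H := H) ha.le hb0 v0
  linarith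

end Aux



/-- for `G = H □ (ℤ/nℤ)` with `H` finite vertex-transitive and uniform
i.i.d. edge weights in `{a,b}`, `0 < a < b`, every edge `e` of `G` satisfies
`P[ρ_e c_G < 0] ≤ (b/a)·|V(H)|⁻¹`. -/
theorem stmt16 {α : Type*} [Fintype α] [DecidableEq α] (H : SimpleGraph α)
    (htrans : ∀ u v : α, ∃ φ : H ≃g H, φ u = v)
    (n : ℕ) [NeZero n] (a b : ℝ) (ha : 0 < a) (hab : a < b) (e : TorusEdge α n) :
    ((Finset.univ.filter fun ω : TorusEdge α n → Bool =>
        cRho e (circumLen a b H) ω < 0).card : ℝ)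
        / 2 ^ Fintype.card (TorusEdge α n)
      ≤ (b / a) * (Fintype.card α : ℝ)⁻¹ := by
  have hα : Nonempty α := by
    rcases e with ⟨q, t⟩ | ⟨v, t⟩
    · obtain ⟨⟨x, y⟩, -⟩ := Quot.exists_rep q
      exact ⟨x⟩
    · exact ⟨v⟩
  obtain ⟨v0⟩ := hα
  have hab' : a ≤ b := hab.le
  have hb0 : (0:ℝ) ≤ b := ha.le.trans hab'
  have hT : (0:ℝ) < 2 ^ Fintype.card (TorusEdge α n) := by positivity
  have hA : (0:ℝ) < Fintype.card α := by
    have := Fintype.card_pos_iff.mpr ⟨v0⟩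
    exact_mod_cast this
  have hn : (0:ℝ) < n := by
    have := Nat.pos_of_ne_zero (NeZero.ne n)
    exact_mod_cast this
  have hkey : ((Finset.univ.filter fun ω : TorusEdge α n → Bool =>
        cRho e (circumLen a b H) ω < 0).card : ℝ) * (a * Fintype.card α)
      ≤ 2 ^ Fintype.card (TorusEdge α n) * b := by
    rcases e with ⟨q, t⟩ | ⟨v, t⟩
    · -- horizontal edge
      obtain ⟨⟨u, w⟩, hq⟩ := Quot.exists_rep q
      have hu : u ∈ q := by rw [← hq]; exact Sym2.mem_mk_left u w
      choose φf hφf using htrans u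
      set pr : α → Sym2 α := fun w' => Sym2.map ⇑(φf w') q with hpr
      set I := Finset.univ.image pr with hI
      set O := (I ×ˢ (Finset.univ : Finset (ZMod n))).image
        (fun ps : Sym2 α × ZMod n => (Sum.inl ps : TorusEdge α n)) with hO
      have hOcard : O.card = I.card * n := by
        rw [hO, Finset.card_image_of_injective _ Sum.inl_injective, Finset.card_product,
          Finset.card_univ, ZMod.card]
      have hA2 : Fintype.card α ≤ 2 * I.card := by
        have hfib : ∀ p ∈ Finset.univ.image pr,
            (Finset.univ.filter fun w' => pr w' = p).card ≤ 2 := by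
          intro p hp
          obtain ⟨⟨x, y⟩, hxy⟩ := Quot.exists_rep p
          have hsub : (Finset.univ.filter fun w' => pr w' = p) ⊆ {x, y} := by
            intro w' hw'
            have hpw : pr w' = p := (Finset.mem_filter.1 hw').2
            have hwmem : w' ∈ pr w' := by
              rw [hpr]
              exact Sym2.mem_map.2 ⟨u, hu, hφf w'⟩
            rw [hpw, ← hxy] at hwmem
            rw [Sym2.mem_iff] at hwmem
            simpa using hwmem
          calc (Finset.univ.filter fun w' => pr w' = p).card
              ≤ ({x, y} : Finset α).card := Finset.card_le_card hsub
          _ ≤ 2 := le_trans (Finset.card_insert_le _ _) (by simp)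
        have h := Finset.card_le_mul_card_image (f := pr) Finset.univ 2 hfib
        rw [Finset.card_univ] at h
        rw [hI]
        exact h
      have horb : ∀ f ∈ O,
          (Finset.univ.filter fun ω : TorusEdge α n → Bool =>
            cRho f (circumLen a b H) ω < 0).card
          = (Finset.univ.filter fun ω : TorusEdge α n → Bool =>
            cRho (Sum.inl (q, t)) (circumLen a b H) ω < 0).card := by
        intro f hf
        rw [hO] at hf
        obtain ⟨⟨p, s⟩, hps, rfl⟩ := Finset.mem_image.1 hf
        have hpmem : p ∈ I := (Finset.mem_product.1 hps).1
        rw [hI] at hpmem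
        obtain ⟨w', -, rfl⟩ := Finset.mem_image.1 hpmem
        have hmap : eMap (φf w').toEquiv (s - t) (Sum.inl (q, t)) = Sum.inl (pr w', s) := by
          show Sum.inl (q.map ⇑(φf w').toEquiv, t + (s - t)) = Sum.inl (pr w', s)
          rw [add_sub_cancel]
          rfl
        have hcount := card_rho_comp (H := H) (n := n) ha.le hb0 v0 (φf w') (s - t)
          (Sum.inl (q, t))
        rw [hmap] at hcount
        exact hcount
      have hk : ∀ (ω : TorusEdge α n → Bool) (start : α × ZMod n)
          (steps : List (α ⊕ Bool)),
          cWalkValid H start steps → cWalkEnd start steps = start →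
          cWinding steps = (n : ℤ) →
          ∀ P : Finset (TorusEdge α n), P ⊆ O →
            (∀ f ∈ P, f ∈ cWalkEdges start steps) →
            a * ((P.card : ℝ) + (n : ℕ)) ≤ ((cWalkEdges start steps).map (cWt a b ω)).sum := by
        intro ω start steps hval hend hwind P hPO hPmem
        have hPleft : ∀ f ∈ P, f.isLeft := by
          intro f hf
          have hfO := hPO hf
          rw [hO] at hfO
          obtain ⟨ps, -, rfl⟩ := Finset.mem_image.1 hfO
          rfl
        exact card_le_sum_left ha hab' ω start steps hwind P hPleft hPmem
      have hm := master (H := H) ha hab' v0 (Sum.inl (q, t)) O n horb hk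
      rw [hOcard] at hm
      push_cast at hm
      have hA2' : (Fintype.card α : ℝ) ≤ 2 * I.card := by exact_mod_cast hA2
      set C := ((Finset.univ.filter fun ω : TorusEdge α n → Bool =>
        cRho (Sum.inl (q, t)) (circumLen a b H) ω < 0).card : ℝ) with hC
      have hC0 : 0 ≤ C := by rw [hC]; positivity
      set T := (2 : ℝ) ^ Fintype.card (TorusEdge α n) with hTdef
      have s1 : (2 * a * (I.card : ℝ) * C + 2 * a * T) * n ≤ (T * (a + b)) * n := by
        nlinarith [hm]
      have s2 := le_of_mul_le_mul_right s1 hn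
      have s3 : (Fintype.card α : ℝ) * (a * C) ≤ 2 * I.card * (a * C) :=
        mul_le_mul_of_nonneg_right hA2' (by positivity)
      nlinarith [s2, s3, mul_pos hT ha]
    · -- vertical edge
      set O := Finset.univ.image (fun p : α × ZMod n => (Sum.inr p : TorusEdge α n)) with hO
      have hOcard : O.card = Fintype.card α * n := by
        rw [hO, Finset.card_image_of_injective _ Sum.inr_injective, Finset.card_univ,
          Fintype.card_prod, ZMod.card]
      have horb : ∀ f ∈ O,
          (Finset.univ.filter fun ω : TorusEdge α n → Bool =>
            cRho f (circumLen a b H) ω < 0).card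
          = (Finset.univ.filter fun ω : TorusEdge α n → Bool =>
            cRho (Sum.inr (v, t)) (circumLen a b H) ω < 0).card := by
        intro f hf
        rw [hO] at hf
        obtain ⟨⟨u, s⟩, -, rfl⟩ := Finset.mem_image.1 hf
        obtain ⟨φ, hφ⟩ := htrans v u
        have hmap : eMap φ.toEquiv (s - t) (Sum.inr (v, t)) = Sum.inr (u, s) := by
          show Sum.inr (φ v, t + (s - t)) = Sum.inr (u, s)
          rw [add_sub_cancel, hφ]
        have hcount := card_rho_comp (H := H) (n := n) ha.le hb0 v0 φ (s - t)
          (Sum.inr (v, t))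
        rw [hmap] at hcount
        exact hcount
      have hk : ∀ (ω : TorusEdge α n → Bool) (start : α × ZMod n)
          (steps : List (α ⊕ Bool)),
          cWalkValid H start steps → cWalkEnd start steps = start →
          cWinding steps = (n : ℤ) →
          ∀ P : Finset (TorusEdge α n), P ⊆ O →
            (∀ f ∈ P, f ∈ cWalkEdges start steps) →
            a * ((P.card : ℝ) + ((0 : ℕ) : ℝ)) ≤ ((cWalkEdges start steps).map (cWt a b ω)).sum := by
        intro ω start steps hval hend hwind P hPO hPmem
        have h := card_le_sum_general ha hab' ω start steps P hPmem
        simpa using h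
      have hm := master (H := H) ha hab' v0 (Sum.inr (v, t)) O 0 horb hk
      rw [hOcard] at hm
      push_cast at hm
      set C := ((Finset.univ.filter fun ω : TorusEdge α n → Bool =>
        cRho (Sum.inr (v, t)) (circumLen a b H) ω < 0).card : ℝ) with hC
      have hC0 : 0 ≤ C := by rw [hC]; positivity
      set T := (2 : ℝ) ^ Fintype.card (TorusEdge α n) with hTdef
      have s1 : (2 * a * (Fintype.card α : ℝ) * C) * n ≤ (T * (a + b)) * n := by
        nlinarith [hm]
      have s2 := le_of_mul_le_mul_right s1 hn
      nlinarith [s2, mul_pos hT ha, mul_le_mul_of_nonneg_left hab' hT.le]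
  have hrw : (b / a) * ((Fintype.card α : ℝ))⁻¹ * 2 ^ Fintype.card (TorusEdge α n)
      = 2 ^ Fintype.card (TorusEdge α n) * b / (a * Fintype.card α) := by
    field_simp
  rw [div_le_iff₀ hT, hrw, le_div_iff₀ (by positivity)]
  linarith [hkey]
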